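/- Let δ ∈ (0,1), α₀ > 0, R ≥ 0 and K ≥ 0 an integer. Suppose (y_k) is a sequence of nonnegative reals satisfying y_{k+1} ≤ δ y_k + R·α_k for all k ≥ K, where α_k = α₀/(k+1). Then for all k ≥ K, y_{k+1} ≤ δ^{k+1-K} y_K + (R α₀ /(1-δ)) δ^{(k+1)/2} + (R/(1-δ)) α_{⌊k/2⌋}. -/

import Mathlib

theorem stmt_4 (δ α₀ R : ℝ) (hδ0 : 0 < δ) (hδ1 : δ < 1) (hα₀ : 0 < α₀) (hR : 0 ≤ R)
    (K : ℕ) (y : ℕ → ℝ) (hy : ∀ k, 0 ≤ y k)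
    (hrec : ∀ k, K ≤ k → y (k + 1) ≤ δ * y k + R * (α₀ / (k + 1)))
    (k : ℕ) (hk : K ≤ k) :
    y (k + 1) ≤ δ ^ (k + 1 - K) * y K + R * α₀ / (1 - δ) * δ ^ (((k : ℝ) + 1) / 2)
      + R / (1 - δ) * (α₀ / ((k / 2 : ℕ) + 1 : ℝ)) := by
  have h1δ : 0 < 1 - δ := by linarith
  have hgeom : ∀ n : ℕ, ∑ j ∈ Finset.range n, δ ^ j ≤ 1 / (1 - δ) := by
    intro n
    have h1 : ∑ j ∈ Finset.range n, δ ^ j = (1 - δ ^ n) / (1 - δ) := by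
      rw [geom_sum_eq (by linarith)]
      rw [← neg_div_neg_eq]; ring_nf
    rw [h1]
    gcongr
    nlinarith [pow_nonneg hδ0.le n]
  -- step 1: recursion unrolled
  have key : ∀ n, K ≤ n → y (n + 1) ≤ δ ^ (n + 1 - K) * y K
      + R * ∑ u ∈ Finset.Icc K n, α₀ / (u + 1) * δ ^ (n - u) := by
    intro n hn
    induction n, hn using Nat.le_induction with
    | base =>
        have := hrec K le_rfl
        simp only [Finset.Icc_self, Finset.sum_singleton, Nat.sub_self, pow_zero,
          Nat.add_sub_cancel_left, pow_one, mul_one] at *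
        linarith
    | succ n hn ih =>
        have hsum : ∑ u ∈ Finset.Icc K (n + 1), α₀ / (u + 1) * δ ^ (n + 1 - u)
            = δ * ∑ u ∈ Finset.Icc K n, α₀ / (u + 1) * δ ^ (n - u)
              + α₀ / ((n : ℝ) + 1 + 1) := by
          rw [Finset.sum_Icc_succ_top (by omega : K ≤ n + 1), Finset.mul_sum]
          congr 1
          · apply Finset.sum_congr rfl
            intro u hu
            have hu' : u ≤ n := (Finset.mem_Icc.mp hu).2
            have h2 : n + 1 - u = (n - u) + 1 := by omega
            rw [h2, pow_succ]
            push_cast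
            ring
          · simp
        have h3 := hrec (n + 1) (by omega)
        have h4 : δ * y (n + 1) ≤ δ * (δ ^ (n + 1 - K) * y K
            + R * ∑ u ∈ Finset.Icc K n, α₀ / (u + 1) * δ ^ (n - u)) :=
          mul_le_mul_of_nonneg_left ih hδ0.le
        have h5 : δ * δ ^ (n + 1 - K) = δ ^ (n + 1 + 1 - K) := by
          rw [show n + 1 + 1 - K = (n + 1 - K) + 1 by omega, pow_succ]; ring
        have h6 : δ * (δ ^ (n + 1 - K) * y K
            + R * ∑ u ∈ Finset.Icc K n, α₀ / (u + 1) * δ ^ (n - u))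
            = δ ^ (n + 1 + 1 - K) * y K
              + R * (δ * ∑ u ∈ Finset.Icc K n, α₀ / (u + 1) * δ ^ (n - u)) := by
          rw [← h5]; ring
        rw [hsum]
        push_cast at h3 h6 ⊢
        linarith [h3, h4, h6]
  have hk' := key k hk
  -- step 2: bound the sum
  set t := (k + 1) / 2 with ht
  have htk : t ≤ k + 1 := by omega
  have h2t : 2 * t ≤ k + 1 := by omega
  have hfnonneg : ∀ u : ℕ, 0 ≤ α₀ / (u + 1 : ℝ) * δ ^ (k - u) := by
    intro u
    apply mul_nonneg (div_nonneg hα₀.le (by positivity)) (pow_nonneg hδ0.le _)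
  have hsub : Finset.Icc K k ⊆ Finset.range (k + 1) := by
    intro u hu
    simp only [Finset.mem_Icc] at hu
    simp only [Finset.mem_range]
    omega
  have hS1 : ∑ u ∈ Finset.Icc K k, α₀ / (u + 1 : ℝ) * δ ^ (k - u)
      ≤ ∑ u ∈ Finset.range (k + 1), α₀ / (u + 1 : ℝ) * δ ^ (k - u) :=
    Finset.sum_le_sum_of_subset_of_nonneg hsub (fun u _ _ => hfnonneg u)
  have hsplit : ∑ u ∈ Finset.range (k + 1), α₀ / (u + 1 : ℝ) * δ ^ (k - u)
      = ∑ u ∈ Finset.range t, α₀ / (u + 1 : ℝ) * δ ^ (k - u)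
        + ∑ u ∈ Finset.Ico t (k + 1), α₀ / (u + 1 : ℝ) * δ ^ (k - u) := by
    rw [Finset.range_eq_Ico, ← Finset.sum_Ico_consecutive _ (Nat.zero_le t) htk]
    rw [Finset.range_eq_Ico]
  -- head bound
  have hhead : ∑ u ∈ Finset.range t, α₀ / (u + 1 : ℝ) * δ ^ (k - u)
      ≤ α₀ * δ ^ (k + 1 - t) * (1 / (1 - δ)) := by
    have h1 : ∑ u ∈ Finset.range t, α₀ / (u + 1 : ℝ) * δ ^ (k - u)
        ≤ ∑ u ∈ Finset.range t, α₀ * δ ^ (k + 1 - t) * δ ^ (t - 1 - u) := by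
      apply Finset.sum_le_sum
      intro u hu
      have hu' : u < t := Finset.mem_range.mp hu
      have hid : (k + 1 - t) + (t - 1 - u) = k - u := by omega
      rw [mul_assoc, ← pow_add, hid]
      apply mul_le_mul_of_nonneg_right _ (pow_nonneg hδ0.le _)
      exact div_le_self hα₀.le (by push_cast; linarith [Nat.cast_nonneg (α := ℝ) u])
    have h2 : ∑ u ∈ Finset.range t, α₀ * δ ^ (k + 1 - t) * δ ^ (t - 1 - u)
        = α₀ * δ ^ (k + 1 - t) * ∑ j ∈ Finset.range t, δ ^ j := by
      rw [← Finset.mul_sum, Finset.sum_range_reflect (fun j => δ ^ j) t]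
    have h3 : α₀ * δ ^ (k + 1 - t) * ∑ j ∈ Finset.range t, δ ^ j
        ≤ α₀ * δ ^ (k + 1 - t) * (1 / (1 - δ)) := by
      apply mul_le_mul_of_nonneg_left (hgeom t)
      positivity
    linarith
  -- tail bound
  have htail : ∑ u ∈ Finset.Ico t (k + 1), α₀ / (u + 1 : ℝ) * δ ^ (k - u)
      ≤ α₀ / ((k / 2 : ℕ) + 1 : ℝ) * (1 / (1 - δ)) := by
    have h1 : ∑ u ∈ Finset.Ico t (k + 1), α₀ / (u + 1 : ℝ) * δ ^ (k - u)
        ≤ ∑ u ∈ Finset.Ico t (k + 1), α₀ / ((k / 2 : ℕ) + 1 : ℝ) * δ ^ (k - u) := by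
      apply Finset.sum_le_sum
      intro u hu
      have hu' : t ≤ u := (Finset.mem_Ico.mp hu).1
      have hku : (k / 2 : ℕ) ≤ u := by omega
      apply mul_le_mul_of_nonneg_right _ (pow_nonneg hδ0.le _)
      apply div_le_div_of_nonneg_left hα₀.le (by positivity)
      have : ((k / 2 : ℕ) : ℝ) ≤ (u : ℝ) := by exact_mod_cast hku
      linarith
    have h2 : ∑ u ∈ Finset.Ico t (k + 1), α₀ / ((k / 2 : ℕ) + 1 : ℝ) * δ ^ (k - u)
        ≤ ∑ u ∈ Finset.range (k + 1), α₀ / ((k / 2 : ℕ) + 1 : ℝ) * δ ^ (k - u) := by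
      apply Finset.sum_le_sum_of_subset_of_nonneg
      · intro u hu; simp only [Finset.mem_Ico] at hu; simp only [Finset.mem_range]; omega
      · intro u _ _
        exact mul_nonneg (div_nonneg hα₀.le (by positivity)) (pow_nonneg hδ0.le _)
    have h3 : ∑ u ∈ Finset.range (k + 1), α₀ / ((k / 2 : ℕ) + 1 : ℝ) * δ ^ (k - u)
        = α₀ / ((k / 2 : ℕ) + 1 : ℝ) * ∑ j ∈ Finset.range (k + 1), δ ^ j := by
      rw [← Finset.mul_sum]
      congr 1
      have := Finset.sum_range_reflect (fun j => δ ^ j) (k + 1)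
      simpa using this
    have h4 : α₀ / ((k / 2 : ℕ) + 1 : ℝ) * ∑ j ∈ Finset.range (k + 1), δ ^ j
        ≤ α₀ / ((k / 2 : ℕ) + 1 : ℝ) * (1 / (1 - δ)) := by
      apply mul_le_mul_of_nonneg_left (hgeom (k + 1))
      positivity
    linarith
  -- rpow comparison
  have hpow : δ ^ (k + 1 - t) ≤ δ ^ (((k : ℝ) + 1) / 2) := by
    rw [← Real.rpow_natCast δ (k + 1 - t)]
    apply Real.rpow_le_rpow_of_exponent_ge hδ0 hδ1.le
    have h2t' : (2 * t : ℝ) ≤ (k : ℝ) + 1 := by exact_mod_cast h2t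
    rw [Nat.cast_sub htk]
    push_cast
    linarith
  have hrnn : (0:ℝ) ≤ δ ^ (((k : ℝ) + 1) / 2) := Real.rpow_nonneg hδ0.le _
  have hSfinal : ∑ u ∈ Finset.Icc K k, α₀ / (u + 1 : ℝ) * δ ^ (k - u)
      ≤ α₀ * δ ^ (((k : ℝ) + 1) / 2) * (1 / (1 - δ))
        + α₀ / ((k / 2 : ℕ) + 1 : ℝ) * (1 / (1 - δ)) := by
    have : α₀ * δ ^ (k + 1 - t) * (1 / (1 - δ))
        ≤ α₀ * δ ^ (((k : ℝ) + 1) / 2) * (1 / (1 - δ)) := by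
      apply mul_le_mul_of_nonneg_right _ (by positivity)
      exact mul_le_mul_of_nonneg_left hpow hα₀.le
    linarith
  have hRS : R * ∑ u ∈ Finset.Icc K k, α₀ / (u + 1 : ℝ) * δ ^ (k - u)
      ≤ R * (α₀ * δ ^ (((k : ℝ) + 1) / 2) * (1 / (1 - δ))
        + α₀ / ((k / 2 : ℕ) + 1 : ℝ) * (1 / (1 - δ))) :=
    mul_le_mul_of_nonneg_left hSfinal hR
  have hfin : R * (α₀ * δ ^ (((k : ℝ) + 1) / 2) * (1 / (1 - δ))
        + α₀ / ((k / 2 : ℕ) + 1 : ℝ) * (1 / (1 - δ)))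
      = R * α₀ / (1 - δ) * δ ^ (((k : ℝ) + 1) / 2)
        + R / (1 - δ) * (α₀ / ((k / 2 : ℕ) + 1 : ℝ)) := by
    ring
  linarith [hk', hRS]
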